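/- Let Q₁ be the linearly oriented type A_n quiver 1 ← 2 ← ... ← n, and consider a sequence of quiver mutations μ_{k_1}, ..., μ_{k_r} which is a shuffle of the lists (1,2,...,n), (1,2,...,n-1), ..., (1,2), (1), subject to the rule that the occurrence of index j in the m-th list comes after the occurrence of index j+1 in the (m-1)-st list. Then at every step i, the quiver Q_i = μ_{k_{i-1}}⋯μ_{k_1}(Q₁) is an orientation of the A_n graph (path graph on vertices 1,...,n) and the mutation vertex k_i is a sink of Q_i. -/

import Mathlib

/-- `IsShuffleSystem elts ks` : the list `ks` is an allowed shuffle of the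
lists `(elts 1, ..., elts l), (elts 1, ..., elts (l-1)), ..., (elts 1, elts 2),
(elts 1)` (where `l = elts.length`), i.e. there is an assignment of positions
`pos v m` (position of the `m`-th occurrence of the `v`-th element, 0-based)
which is bijective onto the positions of `ks`, takes the prescribed values,
lists each row in order, and satisfies the rule that the `v`-th element in row
`m+1` comes after the `(v+1)`-st element in row `m`. -/
def IsShuffleSystem {α : Type*} (elts : List α) (ks : List α) : Prop :=
  ∃ pos : ℕ → ℕ → ℕ,
    (∀ v m, (hv : v < elts.length) → m < elts.length - v →
      ∃ h : pos v m < ks.length, ks.get ⟨pos v m, h⟩ = elts.get ⟨v, hv⟩) ∧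
    (∀ v m m', v < elts.length → m < m' → m' < elts.length - v →
      pos v m < pos v m') ∧
    (∀ v m, v + 1 < elts.length → m < elts.length - (v + 1) →
      pos v m < pos (v + 1) m) ∧
    (∀ v m, v + 1 < elts.length → m < elts.length - (v + 1) →
      pos (v + 1) m < pos v (m + 1)) ∧
    (∀ i : Fin ks.length, ∃ v m, v < elts.length ∧ m < elts.length - v ∧
      pos v m = i.val)

/-- The exchange matrix of the linearly oriented type `A_n` quiver
`1 ← 2 ← ⋯ ← n` (0-based): an arrow `i+1 → i` for each `i`, i.e.
`b_{i+1,i} = 1`. -/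
def AnMat (n : ℕ) : Fin n → Fin n → ℤ := fun i j =>
  if i.val = j.val + 1 then 1 else if i.val + 1 = j.val then -1 else 0

/-- Matrix mutation of a square exchange matrix at the index `k`. -/
def mutSq {n : ℕ} (B : Fin n → Fin n → ℤ) (k : Fin n) : Fin n → Fin n → ℤ :=
  fun i j =>
    if i = k ∨ j = k then -B i j
    else B i j + (|B i k| * B k j + B i k * |B k j|) / 2

/-- Iterated mutation of a square exchange matrix along a list of indices. -/
def mutSeqSq {n : ℕ} (B : Fin n → Fin n → ℤ) (ks : List (Fin n)) :
    Fin n → Fin n → ℤ :=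
  ks.foldl mutSq B

/-- The principal-coefficients (framed) extension of an exchange matrix: the
identity matrix stacked below `B`; rows are indexed by `Fin n ⊕ Fin n`, the
second summand indexing the frozen copies `i'`. -/
def framedMat {n : ℕ} (B : Fin n → Fin n → ℤ) : (Fin n ⊕ Fin n) → Fin n → ℤ :=
  fun i j => Sum.elim (fun a => B a j) (fun a => if a = j then 1 else 0) i

/-- Mutation of an extended (framed) exchange matrix at a mutable index `k`. -/
def mutExt {n : ℕ} (B : (Fin n ⊕ Fin n) → Fin n → ℤ) (k : Fin n) :
    (Fin n ⊕ Fin n) → Fin n → ℤ :=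
  fun i j =>
    if i = Sum.inl k ∨ j = k then -B i j
    else B i j + (|B i k| * B (Sum.inl k) j + B i k * |B (Sum.inl k) j|) / 2

/-- Iterated mutation of an extended exchange matrix along a list of indices. -/
def mutExtSeq {n : ℕ} (B : (Fin n ⊕ Fin n) → Fin n → ℤ) (ks : List (Fin n)) :
    (Fin n ⊕ Fin n) → Fin n → ℤ :=
  ks.foldl mutExt B

theorem tst : True := trivial

def shCnt (n : ℕ) (pos : ℕ → ℕ → ℕ) (v i : ℕ) : ℕ :=
  ((Finset.range (n - v)).filter (fun m' => pos v m' < i)).card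

lemma shCnt_eq {n : ℕ} {pos : ℕ → ℕ → ℕ} {v i c : ℕ} (hc : c ≤ n - v)
    (hiff : ∀ m', m' < n - v → (pos v m' < i ↔ m' < c)) :
    shCnt n pos v i = c := by
  unfold shCnt
  have : (Finset.range (n - v)).filter (fun m' => pos v m' < i) = Finset.range c := by
    ext m'
    simp only [Finset.mem_filter, Finset.mem_range]
    constructor
    · rintro ⟨h1, h2⟩; exact (hiff m' h1).mp h2
    · intro h1; exact ⟨lt_of_lt_of_le h1 hc, (hiff m' (lt_of_lt_of_le h1 hc)).mpr h1⟩
  rw [this, Finset.card_range]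

lemma shCnt_zero (n : ℕ) (pos : ℕ → ℕ → ℕ) (v : ℕ) : shCnt n pos v 0 = 0 := by
  apply shCnt_eq (Nat.zero_le _); intro m' _; omega

lemma AnMat_skew (n : ℕ) (a b : Fin n) : AnMat n a b = -AnMat n b a := by
  unfold AnMat; split_ifs <;> omega

lemma AnMat_diag (n : ℕ) (a : Fin n) : AnMat n a a = 0 := by
  unfold AnMat; split_ifs <;> omega

lemma mut_sink_term (x y : ℤ) (hx : 0 ≤ x) (hy : y ≤ 0) : (|x| * y + x * |y|) / 2 = 0 := by
  rw [abs_of_nonneg hx, abs_of_nonpos hy, show x * y + x * -y = 0 by ring]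
  decide

lemma mutSq_apply {n : ℕ} (B : Fin n → Fin n → ℤ) (k a b : Fin n) :
    mutSq B k a b = if a = k ∨ b = k then -B a b
      else B a b + (|B a k| * B k b + B a k * |B k b|) / 2 := rfl


/-- Along any allowed shuffle mutation sequence starting from the linearly
oriented `A_n` quiver, at every step `i` the current quiver is an orientation
of the `A_n` path graph (skew-symmetric matrix with entries of absolute value
`1` exactly between adjacent vertices) and the mutation vertex `k_i` is a sink. -/
theorem an_shuffle_orientation_sink (n : ℕ) (ks : List (Fin n))
    (h : IsShuffleSystem (List.finRange n) ks) (i : Fin ks.length) :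
    (∀ a b : Fin n,
      mutSeqSq (AnMat n) (ks.take i.val) a b = -mutSeqSq (AnMat n) (ks.take i.val) b a) ∧
    (∀ a b : Fin n,
      (mutSeqSq (AnMat n) (ks.take i.val) a b).natAbs =
        if a.val = b.val + 1 ∨ b.val = a.val + 1 then 1 else 0) ∧
    (∀ j : Fin n, mutSeqSq (AnMat n) (ks.take i.val) (ks.get i) j ≤ 0) := by
  obtain ⟨pos, H1, H2, H3, H4, H5⟩ := h
  have H1' : ∀ v m, v < n → m < n - v →
      ∃ hh : pos v m < ks.length, (ks[pos v m]'hh).val = v := by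
    intro v m hv hm
    obtain ⟨hh, he⟩ := H1 v m (by simpa using hv) (by simpa using hm)
    refine ⟨hh, ?_⟩
    have := congrArg Fin.val he
    simpa [List.get_eq_getElem, List.getElem_finRange] using this
  have H2' : ∀ v m m', v < n → m < m' → m' < n - v → pos v m < pos v m' := by
    intro v m m' hv h1 h2
    exact H2 v m m' (by simpa using hv) h1 (by simpa using h2)
  have H3' : ∀ v m, v + 1 < n → m < n - (v + 1) → pos v m < pos (v + 1) m := by
    intro v m hv hm
    exact H3 v m (by simpa using hv) (by simpa using hm)
  have H4' : ∀ v m, v + 1 < n → m < n - (v + 1) → pos (v + 1) m < pos v (m + 1) := by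
    intro v m hv hm
    exact H4 v m (by simpa using hv) (by simpa using hm)
  have H5' : ∀ j : Fin ks.length, ∃ v m, v < n ∧ m < n - v ∧ pos v m = j.val := by
    intro j
    obtain ⟨v, m, h1, h2, h3⟩ := H5 j
    exact ⟨v, m, by simpa using h1, by simpa using h2, h3⟩
  clear H1 H2 H3 H4 H5
  have hval : ∀ v m, v < n → m < n - v → ∀ (j : ℕ) (hj : j < ks.length),
      pos v m = j → (ks[j]'hj).val = v := by
    intro v m hv hm j hj hpe
    subst hpe
    exact (H1' v m hv hm).2
  have hle : ∀ v m m', v < n → m ≤ m' → m' < n - v → pos v m ≤ pos v m' := by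
    intro v m m' hv hmm hm'
    rcases eq_or_lt_of_le hmm with rfl | hlt
    · exact le_refl _
    · exact le_of_lt (H2' v m m' hv hlt hm')
  -- count lemmas
  have cntA : ∀ v m, v < n → m < n - v → shCnt n pos v (pos v m) = m := by
    intro v m hv hm
    refine shCnt_eq (le_of_lt hm) ?_
    intro m' hm'
    constructor
    · intro hlt
      by_contra hge
      exact absurd hlt (not_lt.mpr (hle v m m' hv (by omega) hm'))
    · intro hlt
      exact H2' v m' m hv hlt hm
  have cntA' : ∀ v m, v < n → m < n - v → shCnt n pos v (pos v m + 1) = m + 1 := by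
    intro v m hv hm
    refine shCnt_eq (by omega) ?_
    intro m' hm'
    constructor
    · intro hlt
      by_contra hge
      have := H2' v m m' hv (by omega) hm'
      omega
    · intro hlt
      have := hle v m' m hv (by omega) hm
      omega
  have cntB : ∀ v m, v + 1 < n → m < n - (v + 1) →
      shCnt n pos v (pos (v + 1) m) = m + 1 := by
    intro v m hv hm
    refine shCnt_eq (by omega) ?_
    intro m' hm'
    constructor
    · intro hlt
      by_contra hge
      have h1 : pos (v + 1) m < pos v (m + 1) := H4' v m hv hm
      have h2 : pos v (m + 1) ≤ pos v m' := hle v (m + 1) m' (by omega) (by omega) hm'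
      omega
    · intro hlt
      have h1 : pos v m' ≤ pos v m := hle v m' m (by omega) (by omega) (by omega)
      have h2 : pos v m < pos (v + 1) m := H3' v m hv hm
      omega
  have cntC : ∀ v m, v + 1 < n → m < n - v → shCnt n pos (v + 1) (pos v m) = m := by
    intro v m hv hm
    refine shCnt_eq (by omega) ?_
    intro m' hm'
    constructor
    · intro hlt
      by_contra hge
      have h1 : pos v m ≤ pos v m' := hle v m m' (by omega) (by omega) (by omega)
      have h2 : pos v m' < pos (v + 1) m' := H3' v m' hv hm'
      omega
    · intro hlt
      have h1 : pos (v + 1) m' < pos v (m' + 1) := H4' v m' hv hm'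
      have h2 : pos v (m' + 1) ≤ pos v m := hle v (m' + 1) m (by omega) (by omega) hm
      omega
  -- sink lemma
  have hsink : ∀ (t : ℕ) (ht : t < ks.length) (j : Fin n),
      (-1 : ℤ) ^ (shCnt n pos (ks[t]'ht).val t + shCnt n pos j.val t) *
        AnMat n (ks[t]'ht) j ≤ 0 := by
    intro t ht j
    obtain ⟨v, m, hv, hm, hpe0⟩ := H5' ⟨t, ht⟩
    have hpe : pos v m = t := hpe0
    have hkv : (ks[t]'ht).val = v := hval v m hv hm t ht hpe
    have hca : shCnt n pos v t = m := by rw [← hpe]; exact cntA v m hv hm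
    unfold AnMat
    rw [hkv, hca]
    split_ifs with h1 h2
    · -- v = j.val + 1
      have hj : shCnt n pos j.val t = m + 1 := by
        have := cntB j.val m (by omega) (by omega)
        rw [show j.val + 1 = v by omega, hpe] at this
        exact this
      rw [hj]
      have hodd : Odd (m + (m + 1)) := ⟨m, by omega⟩
      rw [hodd.neg_one_pow]
      norm_num
    · -- v + 1 = j.val
      have hj : shCnt n pos j.val t = m := by
        have := cntC v m (by omega) hm
        rw [show v + 1 = j.val by omega, hpe] at this
        exact this
      rw [hj]
      have heven : Even (m + m) := ⟨m, by omega⟩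
      rw [heven.neg_one_pow]
      norm_num
    · simp
  -- main invariant
  have main : ∀ t, t ≤ ks.length → ∀ a b : Fin n,
      mutSeqSq (AnMat n) (ks.take t) a b =
        (-1 : ℤ) ^ (shCnt n pos a.val t + shCnt n pos b.val t) * AnMat n a b := by
    intro t
    induction t with
    | zero =>
      intro _ a b
      simp [mutSeqSq, shCnt_zero]
    | succ t ih =>
      intro htl a b
      have ht : t < ks.length := htl
      obtain ⟨v, m, hv, hm, hpe0⟩ := H5' ⟨t, ht⟩
      have hpe : pos v m = t := hpe0
      have hkv : (ks[t]'ht).val = v := hval v m hv hm t ht hpe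
      have hB : ∀ a b : Fin n, List.foldl mutSq (AnMat n) (ks.take t) a b =
          (-1 : ℤ) ^ (shCnt n pos a.val t + shCnt n pos b.val t) * AnMat n a b :=
        ih (le_of_lt ht)
      have hstep : ∀ w : Fin n, shCnt n pos w.val (t + 1) =
          shCnt n pos w.val t + (if w.val = v then 1 else 0) := by
        intro w
        by_cases hwv : w.val = v
        · rw [if_pos hwv, hwv]
          have h1 : shCnt n pos v t = m := by rw [← hpe]; exact cntA v m hv hm
          have h2 : shCnt n pos v (t + 1) = m + 1 := by
            have := cntA' v m hv hm
            rw [hpe] at this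
            exact this
          omega
        · rw [if_neg hwv, add_zero]
          unfold shCnt
          congr 1
          ext m'
          simp only [Finset.mem_filter, Finset.mem_range]
          constructor
          · rintro ⟨hr, hlt⟩
            refine ⟨hr, lt_of_le_of_ne (by omega) ?_⟩
            intro heq
            have := hval w.val m' w.isLt hr t ht heq
            omega
          · rintro ⟨hr, hlt⟩
            exact ⟨hr, by omega⟩
      rw [← List.take_concat_get ht, List.concat_eq_append]
      unfold mutSeqSq
      rw [List.foldl_concat, mutSq_apply]
      rw [hB a b, hB a (ks[t]'ht), hB (ks[t]'ht) b, hstep a, hstep b]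
      by_cases hab : a = ks[t]'ht ∨ b = ks[t]'ht
      · rw [if_pos hab]
        by_cases ha : a = ks[t]'ht <;> by_cases hb : b = ks[t]'ht
        · have hba : b = a := hb.trans ha.symm
          subst hba
          rw [AnMat_diag]
          ring
        · have hav : a.val = v := by rw [ha]; exact hkv
          have hbv : ¬ b.val = v := by
            intro hbv
            exact hb (Fin.ext (by rw [hbv, ← hkv]))
          rw [if_pos hav, if_neg hbv, add_zero, pow_add, pow_add, pow_succ]
          ring
        · have hbv : b.val = v := by rw [hb]; exact hkv
          have hav : ¬ a.val = v := by
            intro hav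
            exact ha (Fin.ext (by rw [hav, ← hkv]))
          rw [if_neg hav, if_pos hbv, add_zero, pow_add, pow_add, pow_succ]
          ring
        · rcases hab with hab | hab
          · exact absurd hab ha
          · exact absurd hab hb
      · rw [if_neg hab]
        push_neg at hab
        obtain ⟨ha, hb⟩ := hab
        have hav : ¬ a.val = v := by
          intro hav
          exact ha (Fin.ext (by rw [hav, ← hkv]))
        have hbv : ¬ b.val = v := by
          intro hbv
          exact hb (Fin.ext (by rw [hbv, ← hkv]))
        rw [if_neg hav, if_neg hbv, add_zero, add_zero]
        have h1 : (-1 : ℤ) ^ (shCnt n pos (ks[t]'ht).val t + shCnt n pos b.val t) *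
            AnMat n (ks[t]'ht) b ≤ 0 := hsink t ht b
        have h2 : (0 : ℤ) ≤ (-1 : ℤ) ^ (shCnt n pos a.val t + shCnt n pos (ks[t]'ht).val t) *
            AnMat n a (ks[t]'ht) := by
          have h3 := hsink t ht a
          have h4 : (-1 : ℤ) ^ (shCnt n pos a.val t + shCnt n pos (ks[t]'ht).val t) *
              AnMat n a (ks[t]'ht) =
              -((-1 : ℤ) ^ (shCnt n pos (ks[t]'ht).val t + shCnt n pos a.val t) *
                AnMat n (ks[t]'ht) a) := by
            rw [AnMat_skew n a (ks[t]'ht), add_comm]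
            ring
          rw [h4]
          linarith
        rw [mut_sink_term _ _ h2 h1, add_zero]
  have hil : i.val ≤ ks.length := le_of_lt i.isLt
  refine ⟨?_, ?_, ?_⟩
  · intro a b
    rw [main i.val hil a b, main i.val hil b a, AnMat_skew n a b,
      add_comm (shCnt n pos a.val i.val)]
    ring
  · intro a b
    rw [main i.val hil a b, Int.natAbs_mul, Int.natAbs_pow]
    norm_num
    unfold AnMat
    split_ifs <;> simp_all
  · intro j
    rw [main i.val hil (ks.get i) j, List.get_eq_getElem]
    exact hsink i.val i.isLt j
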